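/- Let R be a group of squarefree order, S ⊆ R, and suppose Cay(R,S) is a nontrivial generalised wreath product with respect to subgroups K and H (i.e., 1 < K ⊴ H < R and K(S\H) = S\H = (S\H)K). If the center of H intersected with K is not contained in the center of R, then there exists a nontrivial automorphism of R that fixes S setwise. -/
import Mathlib


open scoped Pointwise

/-- if `Cay(R,S)` is a nontrivial generalised wreath product with respect to
`K` and `H` and `Z(H) ∩ K ≰ Z(R)`, then some nontrivial automorphism of `R` fixes `S` setwise. -/
theorem stmt3 {R : Type*} [Group R] [Finite R] (hsf : Squarefree (Nat.card R))
    (S : Set R) (K H : Subgroup R)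
    (hK : ⊥ < K) (hKH : K ≤ H)
    (hnorm : ∀ h ∈ H, ∀ k ∈ K, h * k * h⁻¹ ∈ K)
    (hH : H < ⊤)
    (h1 : (K : Set R) * (S \ (H : Set R)) = S \ (H : Set R))
    (h2 : (S \ (H : Set R)) * (K : Set R) = S \ (H : Set R))
    (hZ : ¬ (Subgroup.centralizer (H : Set R) ⊓ K ≤ Subgroup.center R)) :
    ∃ φ : MulAut R, φ ≠ 1 ∧ φ '' S = S := by
  rw [SetLike.le_def] at hZ
  push_neg at hZ
  obtain ⟨g, hg, hgZ⟩ := hZ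
  have key : ∀ x : R, x ∈ Subgroup.centralizer (H : Set R) ⊓ K →
      ∀ s ∈ S, x * s * x⁻¹ ∈ S := by
    intro x hx s hs
    obtain ⟨hxc, hxK⟩ := hx
    by_cases hsH : s ∈ (H : Set R)
    · have := Subgroup.mem_centralizer_iff.mp hxc s hsH
      rw [← this, mul_assoc, mul_inv_cancel, mul_one]
      exact hs
    · have h3 : x * s ∈ (K : Set R) * (S \ (H : Set R)) :=
        Set.mul_mem_mul hxK ⟨hs, hsH⟩
      rw [h1] at h3
      have h4 : (x * s) * x⁻¹ ∈ (S \ (H : Set R)) * (K : Set R) :=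
        Set.mul_mem_mul h3 (K.inv_mem hxK)
      rw [h2] at h4
      exact h4.1
  refine ⟨MulAut.conj g, ?_, ?_⟩
  · intro h
    apply hgZ
    rw [Subgroup.mem_center_iff]
    intro x
    have := DFunLike.congr_fun (congrArg (MulEquiv.toMonoidHom) h) x
    simp [MulAut.conj] at this
    have : g * x * g⁻¹ = x := this
    calc x * g = (g * x * g⁻¹) * g := by rw [this]
      _ = g * x := by group
  · apply Set.Subset.antisymm
    · rintro _ ⟨s, hs, rfl⟩
      exact key g hg s hs
    · intro s hs
      have hginv : g⁻¹ ∈ Subgroup.centralizer (H : Set R) ⊓ K :=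
        (Subgroup.centralizer (H : Set R) ⊓ K).inv_mem hg
      refine ⟨g⁻¹ * s * g⁻¹⁻¹, key g⁻¹ hginv s hs, ?_⟩
      simp [MulAut.conj]
      group
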